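/- Consider a noisy greedy peeling process on an undirected graph G = (V,E): starting with S₁ = V, at each step t remove a vertex v_t ∈ S_t whose degree in the induced subgraph satisfies |E(v_t, S_t)| ≤ min_{v ∈ S_t} |E(v, S_t)| + 2·err, forming S_{t+1} = S_t \ {v_t}. Let t* maximize |E(v_t, S_t)| over all steps t, and let S* = S_{t*}. Then d(S*) ≥ (d(G) − 4·err)/2. -/

import Mathlib

open Finset

noncomputable def edgesIn {V : Type*} [Fintype V] [DecidableEq V]
    (G : SimpleGraph V) (S : Finset V) : ℕ :=
  letI := Classical.decRel G.Adj
  letI : DecidablePred (fun e : Sym2 V => ∀ v ∈ e, v ∈ S) := Classical.decPred _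
  (G.edgeFinset.filter fun e => ∀ v ∈ e, v ∈ S).card

noncomputable def density {V : Type*} [Fintype V] [DecidableEq V]
    (G : SimpleGraph V) (S : Finset V) : ℝ :=
  (edgesIn G S : ℝ) / S.card

noncomputable def maxDensity {V : Type*} [Fintype V] [DecidableEq V] [Nonempty V]
    (G : SimpleGraph V) : ℝ :=
  (Finset.univ.powerset.filter Finset.Nonempty).sup'
    ⟨{Classical.arbitrary V}, by simp⟩ (density G)

noncomputable def degIn {V : Type*} [DecidableEq V]
    (G : SimpleGraph V) (v : V) (S : Finset V) : ℕ :=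
  letI := Classical.decRel G.Adj
  ((S.erase v).filter (G.Adj v)).card

section
set_option linter.unusedSectionVars false
variable {V : Type*} [Fintype V] [DecidableEq V] (G : SimpleGraph V)

lemma edgesIn_def [DecidableRel G.Adj] (S : Finset V) :
    edgesIn G S = (G.edgeFinset.filter fun e => ∀ v ∈ e, v ∈ S).card := by
  unfold edgesIn; congr!

lemma degIn_def [DecidableRel G.Adj] (v : V) (S : Finset V) :
    degIn G v S = ((S.erase v).filter (G.Adj v)).card := by
  unfold degIn; congr!

lemma degIn_mono (u : V) {S T : Finset V} (h : S ⊆ T) : degIn G u S ≤ degIn G u T := by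
  classical
  rw [degIn_def, degIn_def]
  exact Finset.card_le_card (Finset.filter_subset_filter _ (Finset.erase_subset_erase _ h))

lemma edgesIn_erase {S : Finset V} {u : V} (hu : u ∈ S) :
    edgesIn G S = edgesIn G (S.erase u) + degIn G u S := by
  classical
  rw [edgesIn_def, edgesIn_def, degIn_def]
  have hunion : (G.edgeFinset.filter fun e => ∀ v ∈ e, v ∈ S)
      = (G.edgeFinset.filter fun e => ∀ v ∈ e, v ∈ S.erase u)
        ∪ (((S.erase u).filter (G.Adj u)).image (fun w => s(u, w))) := by
    ext e
    simp only [Finset.mem_union, Finset.mem_filter, Finset.mem_image,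
      SimpleGraph.mem_edgeFinset]
    constructor
    · rintro ⟨he, hv⟩
      by_cases hue : u ∈ e
      · right
        have hspec := Sym2.other_spec hue
        have hadj : G.Adj u (Sym2.Mem.other hue) := by
          rw [← SimpleGraph.mem_edgeSet, hspec]; exact he
        exact ⟨Sym2.Mem.other hue,
          ⟨Finset.mem_erase.2 ⟨fun h => G.irrefl (h ▸ hadj), hv _ (Sym2.other_mem hue)⟩, hadj⟩,
          hspec⟩
      · left
        exact ⟨he, fun w hw => Finset.mem_erase.2 ⟨fun h => hue (h ▸ hw), hv _ hw⟩⟩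
    · rintro (⟨he, hv⟩ | ⟨w, ⟨hw, hadj⟩, rfl⟩)
      · exact ⟨he, fun w hw => (Finset.mem_erase.1 (hv _ hw)).2⟩
      · refine ⟨(SimpleGraph.mem_edgeSet G).2 hadj, ?_⟩
        intro x hx
        rw [Sym2.mem_iff] at hx
        rcases hx with rfl | rfl
        · exact hu
        · exact (Finset.mem_erase.1 hw).2
  rw [hunion, Finset.card_union_of_disjoint, Finset.card_image_of_injOn]
  · intro a _ b _ hab
    exact (Sym2.congr_right).1 hab
  · rw [Finset.disjoint_left]
    rintro e he hce
    simp only [Finset.mem_image, Finset.mem_filter] at he hce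
    obtain ⟨w, _, rfl⟩ := hce
    have := he.2 u (Sym2.mem_mk_left u w)
    exact (Finset.mem_erase.1 this).1 rfl

lemma edgesIn_singleton (u : V) : edgesIn G {u} = 0 := by
  classical
  rw [edgesIn_def, Finset.card_eq_zero, Finset.filter_eq_empty_iff]
  intro e he hv
  rw [SimpleGraph.mem_edgeFinset] at he
  induction e with
  | h x y =>
    have hx := hv x (Sym2.mem_mk_left x y)
    have hy := hv y (Sym2.mem_mk_right x y)
    simp only [Finset.mem_singleton] at hx hy
    subst hx; subst hy
    exact G.irrefl ((SimpleGraph.mem_edgeSet G).1 he)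

lemma degIn_erase_ne [DecidableRel G.Adj] {S : Finset V} {u w : V} (hw : w ≠ u) (huS : u ∈ S) :
    degIn G w S = degIn G w (S.erase u) + (if G.Adj w u then 1 else 0) := by
  rw [degIn_def, degIn_def]
  have hu' : u ∈ S.erase w := Finset.mem_erase.2 ⟨fun h => hw h.symm, huS⟩
  have hins : (S.erase w) = insert u ((S.erase u).erase w) := by
    rw [Finset.erase_right_comm, Finset.insert_erase hu']
  rw [hins, Finset.filter_insert]
  have hnm : u ∉ ((S.erase u).erase w).filter (G.Adj w) := fun hc =>
    (Finset.mem_erase.1 (Finset.mem_erase.1 (Finset.mem_filter.1 hc).1).2).1 rfl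
  split_ifs with h
  · rw [Finset.card_insert_of_notMem hnm]
  · simp

lemma sum_degIn (S : Finset V) : ∑ u ∈ S, degIn G u S = 2 * edgesIn G S := by
  classical
  induction S using Finset.strongInduction with
  | _ S ih =>
    rcases S.eq_empty_or_nonempty with rfl | ⟨u, hu⟩
    · rw [Finset.sum_empty, edgesIn_def]
      have h0 : (G.edgeFinset.filter fun e => ∀ v ∈ e, v ∈ (∅ : Finset V)).card = 0 := by
        rw [Finset.card_eq_zero, Finset.filter_eq_empty_iff]
        intro e _ h
        exact absurd (h e.out.1 (Sym2.out_fst_mem e)) (by simp)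
      omega
    · rw [← Finset.insert_erase hu, Finset.sum_insert (Finset.notMem_erase u S),
        Finset.insert_erase hu]
      have hrec := ih (S.erase u) (Finset.erase_ssubset hu)
      have hdeg : degIn G u S = degIn G u (S.erase u) := by
        rw [degIn_def, degIn_def, Finset.erase_idem]
      have hsum : ∑ w ∈ S.erase u, degIn G w S
          = (∑ w ∈ S.erase u, degIn G w (S.erase u)) + degIn G u S := by
        have : ∀ w ∈ S.erase u, degIn G w S
            = degIn G w (S.erase u) + (if G.Adj w u then 1 else 0) := by
          intro w hw
          exact degIn_erase_ne G (Finset.mem_erase.1 hw).1 hu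
        rw [Finset.sum_congr rfl this, Finset.sum_add_distrib]
        congr 1
        rw [Finset.sum_boole]
        rw [degIn_def]
        norm_cast
        congr 1
        apply Finset.filter_congr
        intro x _
        simp [G.adj_comm]
      rw [hsum, hrec, edgesIn_erase G hu]
      ring
end


section
set_option linter.unusedSectionVars false
variable {V : Type*} [Fintype V] [DecidableEq V] [Nonempty V] (G : SimpleGraph V)

lemma density_le_maxDensity {S : Finset V} (hS : S.Nonempty) :
    density G S ≤ maxDensity G := by
  apply Finset.le_sup'
  simp [hS]

lemma exists_opt : ∃ S : Finset V, S.Nonempty ∧ maxDensity G = density G S := by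
  obtain ⟨S, hS, hEq⟩ := Finset.exists_mem_eq_sup'
    (⟨{Classical.arbitrary V}, by simp⟩ : (Finset.univ.powerset.filter Finset.Nonempty).Nonempty)
    (density G)
  refine ⟨S, ?_, hEq⟩
  simpa using (Finset.mem_filter.1 hS).2

lemma opt_deg_ge {S : Finset V} (hS : S.Nonempty) (hopt : maxDensity G = density G S)
    {u : V} (hu : u ∈ S) : maxDensity G ≤ (degIn G u S : ℝ) := by
  have hk : 1 ≤ S.card := Finset.card_pos.2 hS
  rcases eq_or_lt_of_le hk with hk1 | hk2
  · have hSu : S = {u} := by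
      apply Finset.eq_singleton_iff_unique_mem.2
      refine ⟨hu, fun x hx => ?_⟩
      have := Finset.card_le_one.1 (le_of_eq hk1.symm)
      exact this x hx u hu
    rw [hopt, density, hSu, edgesIn_singleton]
    simp
  · -- card ≥ 2
    have herase : (S.erase u).Nonempty := by
      rw [← Finset.card_pos, Finset.card_erase_of_mem hu]
      omega
    have hle := density_le_maxDensity G herase
    rw [hopt] at hle
    have hE := edgesIn_erase G hu
    set E' := edgesIn G (S.erase u) with hE'
    set d := degIn G u S with hd
    set k := S.card with hkdef
    have hcard : ((S.erase u).card : ℝ) = (k : ℝ) - 1 := by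
      rw [Finset.card_erase_of_mem hu]
      push_cast [Nat.cast_sub (show 1 ≤ S.card from hk)]
      ring
    have hkpos : (0:ℝ) < k := by positivity
    have hk1pos : (0:ℝ) < (k:ℝ) - 1 := by
      have : (2:ℝ) ≤ k := by exact_mod_cast hk2
      linarith
    rw [density, density, hE, hcard] at hle
    push_cast at hle
    rw [div_le_div_iff₀ hk1pos hkpos] at hle
    rw [hopt, density, hE]
    push_cast
    rw [div_le_iff₀ hkpos]
    nlinarith [hle]
end


/-- Noisy greedy peeling: if at each step a vertex whose induced degree is within
`2·err` of the minimum is removed, and `t*` maximizes the removed vertex's induced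
degree, then the corresponding residual set `S* = S t*` satisfies
`d(S*) ≥ (d(G) − 4·err)/2`. -/
theorem noisy_peeling_approx
    {V : Type*} [Fintype V] [DecidableEq V] [Nonempty V]
    (G : SimpleGraph V) (err : ℝ) (herr : 0 ≤ err)
    (S : ℕ → Finset V) (v : ℕ → V)
    (hinit : S 0 = Finset.univ)
    (hmem : ∀ t < Fintype.card V, v t ∈ S t)
    (hnoisymin : ∀ t < Fintype.card V, ∀ u ∈ S t,
      (degIn G (v t) (S t) : ℝ) ≤ (degIn G u (S t) : ℝ) + 2 * err)
    (hstep : ∀ t < Fintype.card V, S (t + 1) = (S t).erase (v t))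
    (tstar : ℕ) (htstar : tstar < Fintype.card V)
    (hmax : ∀ t < Fintype.card V, degIn G (v t) (S t) ≤ degIn G (v tstar) (S tstar)) :
    density G (S tstar) ≥ (maxDensity G - 4 * err) / 2 := by
  classical
  set n := Fintype.card V with hn
  -- cardinality of S t
  have hcard : ∀ t ≤ n, (S t).card = n - t := by
    intro t
    induction t with
    | zero => intro _; simp [hinit, hn]
    | succ t ih =>
      intro ht
      have ht' : t < n := Nat.lt_of_succ_le ht
      rw [hstep t ht', Finset.card_erase_of_mem (hmem t ht'), ih (le_of_lt ht')]
      omega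
  have hSn : S n = ∅ := by
    rw [← Finset.card_eq_zero, hcard n le_rfl]
    omega
  obtain ⟨Sopt, hSoptne, hopt⟩ := exists_opt G
  -- if no vertex of Sopt removed before time t, then Sopt ⊆ S t
  have key : ∀ t ≤ n, (∀ s < t, v s ∉ Sopt) → Sopt ⊆ S t := by
    intro t
    induction t with
    | zero => intro _ _; rw [hinit]; exact Finset.subset_univ _
    | succ t ih =>
      intro ht hnone
      have ht' : t < n := Nat.lt_of_succ_le ht
      rw [hstep t ht']
      intro x hx
      refine Finset.mem_erase.2 ⟨fun h => hnone t (Nat.lt_succ_self t) (h ▸ hx), ?_⟩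
      exact ih (le_of_lt ht') (fun s hs => hnone s (hs.trans (Nat.lt_succ_self t))) hx
  -- existence of a time where a vertex of Sopt is removed
  have hP : ∃ t, t < n ∧ v t ∈ Sopt := by
    by_contra hc
    push_neg at hc
    have := key n le_rfl (fun s hs => hc s hs)
    rw [hSn] at this
    exact hSoptne.ne_empty (Finset.subset_empty.1 this)
  set t0 := Nat.find hP with ht0def
  obtain ⟨ht0n, hvt0⟩ := Nat.find_spec hP
  have hsubopt : Sopt ⊆ S t0 := by
    apply key t0 (le_of_lt ht0n)
    intro s hs hvs
    exact Nat.find_min hP hs ⟨hs.trans ht0n, hvs⟩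
  -- the chain of degree bounds
  set M : ℝ := (degIn G (v tstar) (S tstar) : ℝ) with hM
  have hDM : maxDensity G ≤ M := by
    calc maxDensity G ≤ (degIn G (v t0) Sopt : ℝ) := opt_deg_ge G hSoptne hopt hvt0
    _ ≤ (degIn G (v t0) (S t0) : ℝ) := by exact_mod_cast degIn_mono G _ hsubopt
    _ ≤ M := by rw [hM]; exact_mod_cast hmax t0 ht0n
  -- density lower bound for S tstar
  have hvst : v tstar ∈ S tstar := hmem tstar htstar
  have hSne : (S tstar).Nonempty := ⟨_, hvst⟩
  have hdegs : ∀ u ∈ S tstar, M - 2 * err ≤ (degIn G u (S tstar) : ℝ) := by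
    intro u hu
    have := hnoisymin tstar htstar u hu
    linarith
  have hsum : ((S tstar).card : ℝ) * (M - 2 * err) ≤ 2 * (edgesIn G (S tstar) : ℝ) := by
    have h1 : ((S tstar).card : ℝ) * (M - 2 * err) ≤ ∑ u ∈ S tstar, (degIn G u (S tstar) : ℝ) := by
      rw [← nsmul_eq_mul]
      exact Finset.card_nsmul_le_sum _ _ _ hdegs
    have h2 : (∑ u ∈ S tstar, (degIn G u (S tstar) : ℝ)) = 2 * (edgesIn G (S tstar) : ℝ) := by
      rw [← Nat.cast_sum]
      rw [sum_degIn]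
      push_cast
      ring
    linarith
  have hcpos : (0:ℝ) < (S tstar).card := by
    exact_mod_cast Finset.card_pos.2 hSne
  have hdens : (M - 2 * err) / 2 ≤ density G (S tstar) := by
    rw [density, le_div_iff₀ hcpos]
    nlinarith [hsum]
  have : (maxDensity G - 4 * err) / 2 ≤ (M - 2 * err) / 2 := by linarith
  linarith
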